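/- If f is an injective group homomorphism from the quaternion group Q₈ of order 8 into GL₂(ℂ), then f maps the unique element of order 2 of Q₈ to the scalar matrix −1 (the negative of the identity matrix). -/

import Mathlib

open Matrix

lemma key_matrix {m α β : Matrix (Fin 2) (Fin 2) ℂ}
    (hm2 : m * m = 1) (hm1 : m ≠ 1) (hmn : m ≠ -1)
    (hα : m * α = α * m) (hβ : m * β = β * m) : α * β = β * α := by
  have E : ∀ {X Y : Matrix (Fin 2) (Fin 2) ℂ}, X = Y → ∀ i j, X i j = Y i j := by
    rintro X Y rfl i j; rfl
  have h00 := E hm2 0 0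
  have h01 := E hm2 0 1
  have h10 := E hm2 1 0
  have h11 := E hm2 1 1
  simp [Matrix.mul_apply, Fin.sum_univ_two, Matrix.one_apply] at h00 h01 h10 h11
  -- trace zero
  have htr : m 0 0 + m 1 1 = 0 := by
    by_contra h
    have hb : m 0 1 = 0 := by
      rcases mul_eq_zero.1 (show m 0 1 * (m 0 0 + m 1 1) = 0 by linear_combination h01) with h'|h'
      · exact h'
      · exact absurd h' h
    have hc : m 1 0 = 0 := by
      rcases mul_eq_zero.1 (show m 1 0 * (m 0 0 + m 1 1) = 0 by linear_combination h10) with h'|h'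
      · exact h'
      · exact absurd h' h
    have ha : m 0 0 = 1 ∨ m 0 0 = -1 := by
      rcases mul_eq_zero.1 (show (m 0 0 - 1) * (m 0 0 + 1) = 0 by
        linear_combination h00 - m 1 0 * hb) with h'|h'
      · left; linear_combination h'
      · right; linear_combination h'
    have hdd : m 1 1 = 1 ∨ m 1 1 = -1 := by
      rcases mul_eq_zero.1 (show (m 1 1 - 1) * (m 1 1 + 1) = 0 by
        linear_combination h11 - m 0 1 * hc) with h'|h'
      · left; linear_combination h'
      · right; linear_combination h'
    rcases ha with ha|ha <;> rcases hdd with hdd|hdd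
    · exact hm1 (by ext i j; fin_cases i <;> fin_cases j <;>
        simp [Matrix.one_apply, ha, hb, hc, hdd])
    · exact h (by rw [ha, hdd]; ring)
    · exact h (by rw [ha, hdd]; ring)
    · exact hmn (by ext i j; fin_cases i <;> fin_cases j <;>
        simp [Matrix.one_apply, ha, hb, hc, hdd])
  have hd : m 1 1 = -(m 0 0) := by linear_combination htr
  have A1 := E hα 0 0
  have A2 := E hα 0 1
  have A3 := E hα 1 0
  have B1 := E hβ 0 0
  have B2 := E hβ 0 1
  have B3 := E hβ 1 0
  simp [Matrix.mul_apply, Fin.sum_univ_two] at A1 A2 A3 B1 B2 B3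
  rw [hd] at A2 A3 B2 B3
  rcases eq_or_ne (m 0 0) 0 with ha0 | ha0
  · -- a = 0 case
    rw [ha0] at A2 A3 B2 B3 h00
    have hbc : m 0 1 * m 1 0 = 1 := by linear_combination h00
    have hb : m 0 1 ≠ 0 := by
      intro h; rw [h] at hbc; simp at hbc
    have hps : α 0 0 = α 1 1 := by
      apply mul_left_cancel₀ hb; linear_combination -A2
    have hps' : β 0 0 = β 1 1 := by
      apply mul_left_cancel₀ hb; linear_combination -B2
    have hq : α 0 1 = m 0 1 * m 0 1 * α 1 0 := by
      linear_combination (-(α 0 1)) * hbc - m 0 1 * A1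
    have hq' : β 0 1 = m 0 1 * m 0 1 * β 1 0 := by
      linear_combination (-(β 0 1)) * hbc - m 0 1 * B1
    apply Matrix.ext_iff.mp
    simp only [Fin.forall_fin_two, Matrix.mul_apply, Fin.sum_univ_two]
    refine ⟨⟨?_, ?_⟩, ?_, ?_⟩
    · linear_combination β 1 0 * hq - α 1 0 * hq'
    · linear_combination β 0 1 * hps - α 0 1 * hps'
    · linear_combination α 1 0 * hps' - β 1 0 * hps
    · linear_combination α 1 0 * hq' - β 1 0 * hq
  · -- a ≠ 0 case
    have hq : α 0 1 = m 0 1 * (α 0 0 - α 1 1) / (2 * m 0 0) := by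
      field_simp; linear_combination A2
    have hr : α 1 0 = m 1 0 * (α 0 0 - α 1 1) / (2 * m 0 0) := by
      field_simp; linear_combination -A3
    have hq' : β 0 1 = m 0 1 * (β 0 0 - β 1 1) / (2 * m 0 0) := by
      field_simp; linear_combination B2
    have hr' : β 1 0 = m 1 0 * (β 0 0 - β 1 1) / (2 * m 0 0) := by
      field_simp; linear_combination -B3
    apply Matrix.ext_iff.mp
    simp only [Fin.forall_fin_two, Matrix.mul_apply, Fin.sum_univ_two]
    refine ⟨⟨?_, ?_⟩, ?_, ?_⟩
    · rw [hq, hr, hq', hr']; field_simp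
    · rw [hq, hq']; field_simp; ring
    · rw [hr, hr']; field_simp; ring
    · rw [hq, hr, hq', hr']; field_simp

open QuaternionGroup in
/-- Any injective group homomorphism from the quaternion group `Q₈` into `GL₂(ℂ)` sends
the unique element of order 2 of `Q₈` to the scalar matrix `-1`. -/
theorem faithful_Q8_rep_sends_involution_to_neg_one
    (f : QuaternionGroup 2 →* GL (Fin 2) ℂ) (hf : Function.Injective f) :
    (∃! g : QuaternionGroup 2, orderOf g = 2) ∧
    ∀ g : QuaternionGroup 2, orderOf g = 2 → f g = -1 := by
  have horder : ∀ g : QuaternionGroup 2, orderOf g = 2 ↔ g = a 2 := by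
    intro g
    constructor
    · intro h
      have h1 : g ^ 2 = 1 := by
        have := pow_orderOf_eq_one g; rwa [h] at this
      have h2 : g ≠ 1 := by
        intro hg; rw [hg, orderOf_one] at h; exact absurd h (by norm_num)
      clear h; revert h1 h2; revert g; decide
    · rintro rfl
      have : Fact (Nat.Prime 2) := ⟨Nat.prime_two⟩
      exact orderOf_eq_prime (by decide) (by decide)
  constructor
  · exact ⟨a 2, (horder _).mpr rfl, fun g hg => (horder g).mp hg⟩
  · intro g hg
    rw [(horder g).mp hg]
    by_contra hne
    have hm2 : (↑(f (a 2)) : Matrix (Fin 2) (Fin 2) ℂ) * (↑(f (a 2)) : Matrix (Fin 2) (Fin 2) ℂ) = 1 := by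
      have h : f (a 2) * f (a 2) = 1 := by
        rw [← _root_.map_mul, show (a 2 : QuaternionGroup 2) * a 2 = 1 by decide,
          _root_.map_one]
      simpa using congrArg Units.val h
    have hm1 : (↑(f (a 2)) : Matrix (Fin 2) (Fin 2) ℂ) ≠ 1 := by
      intro h
      have h' : f (a 2) = f 1 := by rw [_root_.map_one]; exact Units.ext (by simpa using h)
      exact (by decide : (a 2 : QuaternionGroup 2) ≠ 1) (hf h')
    have hmn : (↑(f (a 2)) : Matrix (Fin 2) (Fin 2) ℂ) ≠ -1 := by
      intro h
      exact hne (Units.ext (by simpa using h))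
    have hα : (↑(f (a 2)) : Matrix (Fin 2) (Fin 2) ℂ) * (↑(f (a 1)) : Matrix (Fin 2) (Fin 2) ℂ) = (↑(f (a 1)) : Matrix (Fin 2) (Fin 2) ℂ) * (↑(f (a 2)) : Matrix (Fin 2) (Fin 2) ℂ) := by
      have h : f (a 2) * f (a 1) = f (a 1) * f (a 2) := by
        rw [← _root_.map_mul, ← _root_.map_mul,
          show (a 2 : QuaternionGroup 2) * a 1 = a 1 * a 2 by decide]
      simpa using congrArg Units.val h
    have hβ : (↑(f (a 2)) : Matrix (Fin 2) (Fin 2) ℂ) * (↑(f (xa 0)) : Matrix (Fin 2) (Fin 2) ℂ) = (↑(f (xa 0)) : Matrix (Fin 2) (Fin 2) ℂ) * (↑(f (a 2)) : Matrix (Fin 2) (Fin 2) ℂ) := by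
      have h : f (a 2) * f (xa 0) = f (xa 0) * f (a 2) := by
        rw [← _root_.map_mul, ← _root_.map_mul,
          show (a 2 : QuaternionGroup 2) * xa 0 = xa 0 * a 2 by decide]
      simpa using congrArg Units.val h
    have hcomm := key_matrix hm2 hm1 hmn hα hβ
    have h : f (a 1 * xa 0) = f (xa 0 * a 1) := by
      rw [_root_.map_mul, _root_.map_mul]
      exact Units.ext (by simpa using hcomm)
    exact (by decide : (a 1 : QuaternionGroup 2) * xa 0 ≠ xa 0 * a 1) (hf h)
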